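/- Let A be a positive operator on H, 𝔸 = A ⊕ A on H ⊕ H, and T, S A-bounded operators. Then r_𝔸 of the diagonal operator matrix diag(T, S) equals max{r_A(T), r_A(S)}, and r_𝔸 of the antidiagonal matrix [[0, T], [S, 0]] equals √(r_A(TS)). -/

import Mathlib

open ContinuousLinearMap

variable {H : Type*} [NormedAddCommGroup H] [InnerProductSpace ℂ H] [CompleteSpace H]

/-- The seminorm `‖x‖_A = ‖A^{1/2} x‖ = √⟨Ax, x⟩` induced by a positive operator `A`. -/
noncomputable def anorm (A : H →L[ℂ] H) (x : H) : ℝ :=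
  Real.sqrt (A.reApplyInnerSelf x)

/-- `T` is `A`-bounded: `‖Tx‖_A ≤ c ‖x‖_A` for some `c > 0`. -/
def ABounded (A T : H →L[ℂ] H) : Prop :=
  ∃ c : ℝ, 0 < c ∧ ∀ x : H, anorm A (T x) ≤ c * anorm A x

/-- The operator seminorm `‖T‖_A`: the least `c ≥ 0` with `‖Tx‖_A ≤ c ‖x‖_A` for all `x`. -/
noncomputable def aNorm (A T : H →L[ℂ] H) : ℝ :=
  sInf {c : ℝ | 0 ≤ c ∧ ∀ x : H, anorm A (T x) ≤ c * anorm A x}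

/-- The `A`-spectral radius `r_A(T) = inf_{n ≥ 1} ‖T^n‖_A^{1/n}`. -/
noncomputable def aSpecRad (A T : H →L[ℂ] H) : ℝ :=
  ⨅ n : ℕ+, aNorm A (T ^ (n : ℕ)) ^ ((n : ℝ)⁻¹)

/-- The `A`-numerical radius `ω_A(T) = sup {|⟨ATx, x⟩| : ‖x‖_A = 1}`. -/
noncomputable def aNumRad (A T : H →L[ℂ] H) : ℝ :=
  sSup {c : ℝ | ∃ x : H, anorm A x = 1 ∧ c = ‖(inner ℂ (A (T x)) x : ℂ)‖}

/-- The operator on `H^d` (with the `ℓ²` product structure) given by a `d × d`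
matrix of operators: `(matOp T) x i = ∑ j, T i j (x j)`. -/
noncomputable def matOp {d : ℕ} (T : Fin d → Fin d → (H →L[ℂ] H)) :
    PiLp 2 (fun _ : Fin d => H) →L[ℂ] PiLp 2 (fun _ : Fin d => H) :=
  (((PiLp.continuousLinearEquiv 2 ℂ (fun _ : Fin d => H)).symm :
      (∀ _ : Fin d, H) →L[ℂ] PiLp 2 (fun _ : Fin d => H))) ∘L
    (ContinuousLinearMap.pi fun i => ∑ j, (T i j) ∘L
      ((ContinuousLinearMap.proj j) ∘L
        ((PiLp.continuousLinearEquiv 2 ℂ (fun _ : Fin d => H)) :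
          PiLp 2 (fun _ : Fin d => H) →L[ℂ] (∀ _ : Fin d, H))))

set_option linter.unusedSectionVars false
set_option linter.unusedVariables false
set_option maxHeartbeats 1000000
set_option synthInstance.maxHeartbeats 400000

section Generic
omit [CompleteSpace H]
variable {A T S X Y C : H →L[ℂ] H}

lemma anorm_nonneg (A : H →L[ℂ] H) (x : H) : 0 ≤ anorm A x := Real.sqrt_nonneg _

lemma anorm_zero : anorm A (0 : H) = 0 := by simp [anorm, reApplyInnerSelf]

lemma bddBelow_aset (A T : H →L[ℂ] H) :
    BddBelow {c : ℝ | 0 ≤ c ∧ ∀ x : H, anorm A (T x) ≤ c * anorm A x} :=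
  ⟨0, fun _ hc => hc.1⟩

lemma aNorm_nonneg (A T : H →L[ℂ] H) : 0 ≤ aNorm A T :=
  Real.sInf_nonneg (fun _ hc => hc.1)

lemma aNorm_le {c : ℝ} (hc : 0 ≤ c) (h : ∀ x : H, anorm A (T x) ≤ c * anorm A x) :
    aNorm A T ≤ c := csInf_le (bddBelow_aset A T) ⟨hc, h⟩

lemma anorm_apply_le (hT : ABounded A T) (x : H) :
    anorm A (T x) ≤ aNorm A T * anorm A x := by
  obtain ⟨c, hc, hb⟩ := hT
  rcases eq_or_lt_of_le (anorm_nonneg A x) with h0 | h0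
  · have := hb x
    rw [← h0] at this ⊢
    simpa using this
  · rw [← div_le_iff₀ h0]
    refine le_csInf ⟨c, hc.le, hb⟩ ?_
    rintro b ⟨hb0, hbb⟩
    rw [div_le_iff₀ h0]
    exact hbb x

lemma ABounded.one : ABounded A 1 := ⟨1, one_pos, fun x => by simp⟩

lemma ABounded.mul (hX : ABounded A X) (hY : ABounded A Y) : ABounded A (X * Y) := by
  obtain ⟨c, hc, hb⟩ := hX
  obtain ⟨d, hd, hb'⟩ := hY
  exact ⟨c * d, mul_pos hc hd, fun x => by
    calc anorm A ((X * Y) x) = anorm A (X (Y x)) := rfl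
    _ ≤ c * anorm A (Y x) := hb _
    _ ≤ c * (d * anorm A x) := by nlinarith [hb' x, anorm_nonneg A (Y x)]
    _ = c * d * anorm A x := by ring⟩

lemma ABounded.pow (hX : ABounded A X) (n : ℕ) : ABounded A (X ^ n) := by
  induction n with
  | zero => simpa using ABounded.one
  | succ n ih => rw [pow_succ]; exact ih.mul hX

lemma aNorm_mul_le (hX : ABounded A X) (hY : ABounded A Y) :
    aNorm A (X * Y) ≤ aNorm A X * aNorm A Y := by
  refine aNorm_le (mul_nonneg (aNorm_nonneg A X) (aNorm_nonneg A Y)) fun x => ?_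
  calc anorm A ((X * Y) x) = anorm A (X (Y x)) := rfl
  _ ≤ aNorm A X * anorm A (Y x) := anorm_apply_le hX _
  _ ≤ aNorm A X * (aNorm A Y * anorm A x) := by
      nlinarith [anorm_apply_le hY x, aNorm_nonneg A X, anorm_nonneg A (Y x)]
  _ = aNorm A X * aNorm A Y * anorm A x := by ring

lemma aNorm_one_le : aNorm (H := H) A 1 ≤ 1 := aNorm_le one_pos.le (fun x => by simp)

lemma aNorm_pow_mul_le (hX : ABounded A X) (n m : ℕ) :
    aNorm A (X ^ (n * m)) ≤ aNorm A (X ^ n) ^ m := by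
  induction m with
  | zero => simpa using aNorm_one_le
  | succ m ih =>
      have h1 : X ^ (n * (m + 1)) = X ^ (n * m) * X ^ n := by rw [← pow_add]; ring_nf
      rw [h1, pow_succ]
      calc aNorm A (X ^ (n * m) * X ^ n) ≤ aNorm A (X ^ (n * m)) * aNorm A (X ^ n) :=
        aNorm_mul_le (hX.pow _) (hX.pow _)
      _ ≤ aNorm A (X ^ n) ^ m * aNorm A (X ^ n) :=
          mul_le_mul_of_nonneg_right ih (aNorm_nonneg A _)

lemma aSpecRad_nonneg (A T : H →L[ℂ] H) : 0 ≤ aSpecRad A T :=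
  Real.iInf_nonneg fun n => Real.rpow_nonneg (aNorm_nonneg A _) _

lemma aSpecRad_le (A T : H →L[ℂ] H) (n : ℕ+) :
    aSpecRad A T ≤ aNorm A (T ^ (n : ℕ)) ^ ((n : ℝ)⁻¹) :=
  ciInf_le ⟨0, by rintro x ⟨n, rfl⟩; exact Real.rpow_nonneg (aNorm_nonneg A _) _⟩ n

lemma le_aSpecRad {b : ℝ} (h : ∀ n : ℕ+, b ≤ aNorm A (T ^ (n : ℕ)) ^ ((n : ℝ)⁻¹)) :
    b ≤ aSpecRad A T := le_ciInf h

lemma exists_term_lt {b : ℝ} (hb : aSpecRad A T < b) :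
    ∃ n : ℕ+, aNorm A (T ^ (n : ℕ)) ^ ((n : ℝ)⁻¹) < b :=
  exists_lt_of_ciInf_lt hb

lemma term_mul_le (hX : ABounded A X) (n m : ℕ+) :
    aNorm A (X ^ (((n : ℕ) * (m : ℕ)))) ^ ((((n : ℕ) * (m : ℕ) : ℕ) : ℝ))⁻¹ ≤
      aNorm A (X ^ (n : ℕ)) ^ ((n : ℝ)⁻¹) := by
  have h1 : aNorm A (X ^ ((n : ℕ) * (m : ℕ))) ≤ aNorm A (X ^ (n : ℕ)) ^ (m : ℕ) :=
    aNorm_pow_mul_le hX n m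
  have hn : (0:ℝ) < ((n : ℕ) : ℝ) := by exact_mod_cast n.pos
  have hm : (0:ℝ) < ((m : ℕ) : ℝ) := by exact_mod_cast m.pos
  calc aNorm A (X ^ ((n:ℕ) * (m:ℕ))) ^ ((((n:ℕ) * (m:ℕ) : ℕ)  : ℝ))⁻¹
      ≤ (aNorm A (X ^ (n : ℕ)) ^ (m : ℕ)) ^ ((((n:ℕ) * (m:ℕ) : ℕ) : ℝ))⁻¹ := by
        apply Real.rpow_le_rpow (aNorm_nonneg A _) h1
        positivity
  _ = aNorm A (X ^ (n : ℕ)) ^ ((n : ℝ))⁻¹ := by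
        rw [← Real.rpow_natCast (aNorm A (X ^ (n:ℕ))) (m : ℕ), ← Real.rpow_mul (aNorm_nonneg A _)]
        congr 1
        push_cast
        field_simp

lemma rpow_half_sq {u : ℝ} (hu : 0 ≤ u) (n : ℕ+) :
    (u ^ (((2 * (n : ℕ) : ℕ) : ℝ))⁻¹) ^ 2 = u ^ ((n : ℝ))⁻¹ := by
  rw [← Real.rpow_natCast (u ^ (((2 * (n : ℕ) : ℕ) : ℝ))⁻¹) 2, ← Real.rpow_mul hu]
  congr 1
  have hn : ((n : ℕ) : ℝ) ≠ 0 := by exact_mod_cast n.pos.ne'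
  push_cast
  field_simp

lemma aSpecRad_sq (hC : ABounded A C) : aSpecRad A (C ^ 2) = aSpecRad A C ^ 2 := by
  set r := aSpecRad A C with hr
  have hr0 : 0 ≤ r := aSpecRad_nonneg A C
  have hterm : ∀ n : ℕ+, aNorm A ((C ^ 2) ^ (n : ℕ)) ^ ((n : ℝ))⁻¹ =
      (aNorm A (C ^ ((2 * n : ℕ+) : ℕ)) ^ ((((2 * n : ℕ+) : ℕ) : ℝ))⁻¹) ^ 2 := by
    intro n
    have h1 : (C ^ 2) ^ (n : ℕ) = C ^ (2 * (n : ℕ)) := by rw [pow_mul]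
    have h2 : ((2 * n : ℕ+) : ℕ) = 2 * (n : ℕ) := by simp
    rw [h1, h2, rpow_half_sq (aNorm_nonneg A _)]
  refine le_antisymm ?_ ?_
  · by_contra hcon
    push_neg at hcon
    set x := aSpecRad A (C ^ 2) with hx
    have hx0 : 0 ≤ x := aSpecRad_nonneg A _
    have hrs : r < Real.sqrt x := by
      rw [show r = Real.sqrt (r ^ 2) from (Real.sqrt_sq hr0).symm]
      exact Real.sqrt_lt_sqrt (sq_nonneg r) hcon
    obtain ⟨n, hn⟩ := exists_term_lt (lt_of_le_of_lt (le_refl r) hrs)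
    have hc2n : aNorm A (C ^ ((n : ℕ) * 2)) ^ ((((n : ℕ) * 2 : ℕ) : ℝ))⁻¹ ≤
        aNorm A (C ^ (n : ℕ)) ^ ((n : ℝ))⁻¹ := term_mul_le hC n 2
    have hxle : x ≤ aNorm A ((C ^ 2) ^ (n : ℕ)) ^ ((n : ℝ))⁻¹ := aSpecRad_le A _ n
    rw [hterm n] at hxle
    have h2n : ((2 * n : ℕ+) : ℕ) = (n : ℕ) * 2 := by simp [mul_comm]
    rw [h2n] at hxle
    have hlt : (aNorm A (C ^ ((n : ℕ) * 2)) ^ ((((n : ℕ) * 2 : ℕ) : ℝ))⁻¹) ^ 2 < x := by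
      calc (aNorm A (C ^ ((n : ℕ) * 2)) ^ ((((n : ℕ) * 2 : ℕ) : ℝ))⁻¹) ^ 2
          ≤ (aNorm A (C ^ (n : ℕ)) ^ ((n : ℝ))⁻¹) ^ 2 := by
            apply pow_le_pow_left₀ (Real.rpow_nonneg (aNorm_nonneg A _) _) hc2n
      _ < Real.sqrt x ^ 2 := by
            apply pow_lt_pow_left₀ hn (Real.rpow_nonneg (aNorm_nonneg A _) _) two_ne_zero
      _ = x := Real.sq_sqrt hx0
    exact absurd (lt_of_le_of_lt hxle hlt) (lt_irrefl x)
  · refine le_aSpecRad fun n => ?_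
    rw [hterm n]
    have := aSpecRad_le A C (2 * n)
    exact pow_le_pow_left₀ hr0 this 2

lemma mul_pow_succ_eq (X Y : H →L[ℂ] H) (k : ℕ) :
    (X * Y) ^ (k + 1) = X * (Y * X) ^ k * Y := by
  induction k with
  | zero => simp
  | succ k ih =>
      rw [pow_succ', ih, pow_succ']
      noncomm_ring

lemma aSpecRad_mul_le (hX : ABounded A X) (hY : ABounded A Y) :
    aSpecRad A (X * Y) ≤ aSpecRad A (Y * X) := by
  refine le_aSpecRad fun m => ?_
  set a := aNorm A X with ha
  set b := aNorm A Y with hb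
  set d := aNorm A ((Y * X) ^ (m : ℕ)) with hd
  have ha0 : 0 ≤ a := aNorm_nonneg A X
  have hb0 : 0 ≤ b := aNorm_nonneg A Y
  have hd0 : 0 ≤ d := aNorm_nonneg A _
  have key : ∀ k : ℕ, aNorm A ((X * Y) ^ ((m : ℕ) * k + 1)) ≤ a * b * d ^ k := by
    intro k
    rw [mul_pow_succ_eq]
    calc aNorm A (X * (Y * X) ^ ((m : ℕ) * k) * Y)
        ≤ aNorm A (X * (Y * X) ^ ((m : ℕ) * k)) * b :=
          aNorm_mul_le (hX.mul ((hY.mul hX).pow _)) hY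
    _ ≤ (a * aNorm A ((Y * X) ^ ((m : ℕ) * k))) * b := by
        apply mul_le_mul_of_nonneg_right (aNorm_mul_le hX ((hY.mul hX).pow _)) hb0
    _ ≤ (a * d ^ k) * b := by
        have := aNorm_pow_mul_le (hY.mul hX) (m : ℕ) k
        apply mul_le_mul_of_nonneg_right _ hb0
        exact mul_le_mul_of_nonneg_left this ha0
    _ = a * b * d ^ k := by ring
  by_cases h0 : a * b * d = 0
  · have h1 : aNorm A ((X * Y) ^ ((m : ℕ) * 1 + 1)) ≤ 0 := by
      have := key 1
      nlinarith [aNorm_nonneg A ((X * Y) ^ ((m : ℕ) * 1 + 1))]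
    have h2 : aNorm A ((X * Y) ^ ((m : ℕ) * 1 + 1)) = 0 :=
      le_antisymm h1 (aNorm_nonneg A _)
    have hidx : aSpecRad A (X * Y) ≤ 0 := by
      have h3 := aSpecRad_le A (X * Y) ⟨(m : ℕ) * 1 + 1, Nat.succ_pos _⟩
      calc aSpecRad A (X * Y) ≤ aNorm A ((X * Y) ^ ((m : ℕ) * 1 + 1)) ^
            ((((m : ℕ) * 1 + 1 : ℕ) : ℝ))⁻¹ := h3
      _ = 0 := by
          rw [h2, Real.zero_rpow]
          positivity
    exact le_trans hidx (Real.rpow_nonneg hd0 _)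
  · have hab : 0 < a * b := by
      rcases (mul_nonneg ha0 hb0).lt_or_eq with h | h
      · exact h
      · exact absurd (by rw [← h]; ring) h0
    have hdpos : 0 < d := by
      rcases hd0.lt_or_eq with h | h
      · exact h
      · exact absurd (by rw [← h]; ring) h0
    set Q := Real.log (a * b) with hQ
    set L := Real.log d with hL
    have hbd : ∀ k : ℕ, aSpecRad A (X * Y) ≤
        Real.exp ((Q + k * L) / ((m : ℕ) * k + 1)) := by
      intro k
      have hpos : (0:ℝ) < a * b * d ^ k := mul_pos hab (pow_pos hdpos k)
      have hidx := aSpecRad_le A (X * Y) ⟨(m : ℕ) * k + 1, Nat.succ_pos _⟩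
      refine le_trans hidx ?_
      have h1 : aNorm A ((X * Y) ^ ((⟨(m : ℕ) * k + 1, Nat.succ_pos _⟩ : ℕ+) : ℕ)) ^
          (((( ⟨(m : ℕ) * k + 1, Nat.succ_pos _⟩ : ℕ+) : ℕ) : ℝ))⁻¹ ≤
          (a * b * d ^ k) ^ ((((m : ℕ) * k + 1 : ℕ) : ℝ))⁻¹ := by
        apply Real.rpow_le_rpow (aNorm_nonneg A _) (key k)
        positivity
      refine le_trans h1 ?_
      rw [Real.rpow_def_of_pos hpos, Real.log_mul (ne_of_gt hab) (ne_of_gt (pow_pos hdpos k)),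
        Real.log_pow]
      apply le_of_eq
      congr 1
      push_cast
      rw [div_eq_mul_inv]
    have hmne : ((m : ℕ) : ℝ) ≠ 0 := by exact_mod_cast m.pos.ne'
    have htend : Filter.Tendsto (fun k : ℕ => (Q + k * L) / ((m : ℕ) * k + 1))
        Filter.atTop (nhds (L / (m : ℕ))) := by
      have h1 : Filter.Tendsto (fun k : ℕ => ((k : ℝ))⁻¹) Filter.atTop (nhds 0) :=
        tendsto_natCast_atTop_atTop.inv_tendsto_atTop
      have hnum : Filter.Tendsto (fun k : ℕ => Q * ((k : ℝ))⁻¹ + L) Filter.atTop (nhds L) := by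
        have := (h1.const_mul Q).add_const L
        simpa using this
      have hden : Filter.Tendsto (fun k : ℕ => ((m : ℕ) : ℝ) + ((k : ℝ))⁻¹) Filter.atTop
          (nhds (((m : ℕ) : ℝ))) := by
        have := h1.const_add (((m : ℕ) : ℝ))
        simpa using this
      have hdiv := hnum.div hden hmne
      refine hdiv.congr' ?_
      filter_upwards [Filter.eventually_ge_atTop 1] with k hk
      have hk0 : ((k : ℝ)) ≠ 0 := by
        have : (0:ℝ) < (k : ℝ) := by exact_mod_cast hk
        exact this.ne'
      simp only [Pi.div_apply]; field_simp
    have htend2 : Filter.Tendsto (fun k : ℕ => Real.exp ((Q + k * L) / ((m : ℕ) * k + 1)))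
        Filter.atTop (nhds (Real.exp (L / (m : ℕ)))) := (Real.continuous_exp.tendsto _).comp htend
    have hfin : aSpecRad A (X * Y) ≤ Real.exp (L / (m : ℕ)) :=
      ge_of_tendsto' htend2 hbd
    rw [Real.rpow_def_of_pos hdpos, ← hL, mul_comm]
    rwa [div_eq_mul_inv, mul_comm] at hfin

lemma aSpecRad_mul_comm (hX : ABounded A X) (hY : ABounded A Y) :
    aSpecRad A (X * Y) = aSpecRad A (Y * X) :=
  le_antisymm (aSpecRad_mul_le hX hY) (aSpecRad_mul_le hY hX)

lemma le_of_sq_le_sq' {a b : ℝ} (ha : 0 ≤ a) (hb : 0 ≤ b) (h : a ^ 2 ≤ b ^ 2) : a ≤ b := by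
  nlinarith

lemma eq_of_sq_eq {a b : ℝ} (ha : 0 ≤ a) (hb : 0 ≤ b) (h : a ^ 2 = b ^ 2) : a = b := by
  nlinarith [sq_nonneg (a - b), sq_nonneg (a + b)]

lemma max_rpow {u v p : ℝ} (hu : 0 ≤ u) (hv : 0 ≤ v) (hp : 0 ≤ p) :
    max u v ^ p = max (u ^ p) (v ^ p) := by
  rcases le_total u v with h | h
  · rw [max_eq_right h, max_eq_right (Real.rpow_le_rpow hu h hp)]
  · rw [max_eq_left h, max_eq_left (Real.rpow_le_rpow hv h hp)]

end Generic

section MatOp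
variable {A T S X Y X' Y' : H →L[ℂ] H}

omit [CompleteSpace H] in
lemma matOp_apply {d : ℕ} (T : Fin d → Fin d → (H →L[ℂ] H)) (v : PiLp 2 (fun _ : Fin d => H))
    (i : Fin d) : matOp T v i = ∑ j, T i j (v j) := by simp [matOp]

omit [CompleteSpace H] in
lemma matOp_diag_apply (v : PiLp 2 (fun _ : Fin 2 => H)) :
    matOp ![![X, 0], ![0, Y]] v = ![X (v 0), Y (v 1)] := by
  funext i; fin_cases i <;> simp [matOp_apply, Fin.sum_univ_two]

omit [CompleteSpace H] in
lemma matOp_anti_apply (v : PiLp 2 (fun _ : Fin 2 => H)) :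
    matOp ![![0, X], ![Y, 0]] v = ![X (v 1), Y (v 0)] := by
  funext i; fin_cases i <;> simp [matOp_apply, Fin.sum_univ_two]

omit [CompleteSpace H] in
lemma matOp_diag_mul :
    matOp ![![X, 0], ![0, Y]] * matOp ![![X', 0], ![0, Y']] =
      matOp ![![X * X', 0], ![0, Y * Y']] := by
  ext v i
  show matOp _ (matOp _ v) i = _
  rw [matOp_diag_apply, matOp_diag_apply, matOp_diag_apply]
  fin_cases i <;> rfl

omit [CompleteSpace H] in
lemma matOp_diag_pow (n : ℕ) :
    (matOp ![![X, 0], ![0, Y]]) ^ n = matOp ![![X ^ n, 0], ![0, Y ^ n]] := by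
  induction n with
  | zero =>
      ext v i
      show v i = matOp _ v i
      rw [matOp_diag_apply]
      fin_cases i <;> simp
  | succ n ih => rw [pow_succ, ih, matOp_diag_mul, ← pow_succ, ← pow_succ]

omit [CompleteSpace H] in
lemma matOp_anti_sq :
    (matOp ![![(0 : H →L[ℂ] H), X], ![Y, 0]]) ^ 2 = matOp ![![X * Y, 0], ![0, Y * X]] := by
  ext v i
  show matOp _ (matOp _ v) i = matOp _ v i
  rw [matOp_anti_apply, matOp_anti_apply, matOp_diag_apply]
  fin_cases i <;> rfl

omit [CompleteSpace H] in
lemma reApply_matOp (v : PiLp 2 (fun _ : Fin 2 => H)) :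
    (matOp ![![A, 0], ![0, A]]).reApplyInnerSelf v =
      A.reApplyInnerSelf (v 0) + A.reApplyInnerSelf (v 1) := by
  simp only [reApplyInnerSelf, matOp_diag_apply]
  rw [PiLp.inner_apply, Fin.sum_univ_two]
  simp [matOp_diag_apply, Matrix.cons_val_zero, Matrix.cons_val_one]

lemma anorm_matOp_sq (hA : A.IsPositive) (v : PiLp 2 (fun _ : Fin 2 => H)) :
    anorm (matOp ![![A, 0], ![0, A]]) v ^ 2 = anorm A (v 0) ^ 2 + anorm A (v 1) ^ 2 := by
  simp only [anorm]
  rw [Real.sq_sqrt, Real.sq_sqrt (hA.2 _), Real.sq_sqrt (hA.2 _), reApply_matOp]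
  rw [reApply_matOp]
  exact add_nonneg (hA.2 _) (hA.2 _)

lemma anorm_pair0 (hA : A.IsPositive) (x : H) :
    anorm (matOp ![![A, 0], ![0, A]]) (WithLp.toLp 2 ![x, 0] : PiLp 2 (fun _ : Fin 2 => H)) = anorm A x := by
  refine eq_of_sq_eq (anorm_nonneg _ _) (anorm_nonneg _ _) ?_
  rw [anorm_matOp_sq hA]
  show anorm A x ^ 2 + anorm A 0 ^ 2 = _
  rw [anorm_zero]; ring

lemma anorm_pair1 (hA : A.IsPositive) (y : H) :
    anorm (matOp ![![A, 0], ![0, A]]) (WithLp.toLp 2 ![0, y] : PiLp 2 (fun _ : Fin 2 => H)) = anorm A y := by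
  refine eq_of_sq_eq (anorm_nonneg _ _) (anorm_nonneg _ _) ?_
  rw [anorm_matOp_sq hA]
  show anorm A 0 ^ 2 + anorm A y ^ 2 = _
  rw [anorm_zero]; ring

lemma aNorm_matOp_diag (hA : A.IsPositive) (hX : ABounded A X) (hY : ABounded A Y) :
    aNorm (matOp ![![A, 0], ![0, A]]) (matOp ![![X, 0], ![0, Y]]) =
      max (aNorm A X) (aNorm A Y) := by
  set 𝔸 := matOp ![![A, 0], ![0, A]]
  set M := max (aNorm A X) (aNorm A Y) with hM
  have hM0 : 0 ≤ M := le_trans (aNorm_nonneg A X) (le_max_left _ _)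
  have hbound : ∀ v, anorm 𝔸 (matOp ![![X, 0], ![0, Y]] v) ≤ M * anorm 𝔸 v := by
    intro v
    refine le_of_sq_le_sq' (anorm_nonneg _ _) (mul_nonneg hM0 (anorm_nonneg _ _)) ?_
    rw [mul_pow, anorm_matOp_sq hA, anorm_matOp_sq hA v, matOp_diag_apply]
    have h0 : anorm A (X (v 0)) ≤ M * anorm A (v 0) := by
      refine le_trans (anorm_apply_le hX _) ?_
      exact mul_le_mul_of_nonneg_right (le_max_left _ _) (anorm_nonneg _ _)
    have h1 : anorm A (Y (v 1)) ≤ M * anorm A (v 1) := by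
      refine le_trans (anorm_apply_le hY _) ?_
      exact mul_le_mul_of_nonneg_right (le_max_right _ _) (anorm_nonneg _ _)
    have e0 : (![X (v 0), Y (v 1)] : Fin 2 → H) 0 = X (v 0) := rfl
    have e1 : (![X (v 0), Y (v 1)] : Fin 2 → H) 1 = Y (v 1) := rfl
    rw [e0, e1]
    nlinarith [anorm_nonneg A (X (v 0)), anorm_nonneg A (Y (v 1)), anorm_nonneg A (v 0),
      anorm_nonneg A (v 1)]
  refine le_antisymm (aNorm_le hM0 hbound) ?_
  have hXle : aNorm A X ≤ aNorm 𝔸 (matOp ![![X, 0], ![0, Y]]) := by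
    refine le_csInf ⟨M, hM0, hbound⟩ ?_
    rintro c ⟨hc0, hcb⟩
    refine aNorm_le hc0 fun x => ?_
    have := hcb (WithLp.toLp 2 ![x, 0] : PiLp 2 (fun _ : Fin 2 => H))
    rw [anorm_pair0 hA] at this
    refine le_trans ?_ this
    have he : matOp ![![X, 0], ![0, Y]] (WithLp.toLp 2 ![x, 0]) = WithLp.toLp 2 ![X x, 0] := by
      ext i; fin_cases i <;> simp [matOp_apply, Fin.sum_univ_two]
    rw [he, anorm_pair0 hA]
  have hYle : aNorm A Y ≤ aNorm 𝔸 (matOp ![![X, 0], ![0, Y]]) := by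
    refine le_csInf ⟨M, hM0, hbound⟩ ?_
    rintro c ⟨hc0, hcb⟩
    refine aNorm_le hc0 fun y => ?_
    have := hcb (WithLp.toLp 2 ![0, y] : PiLp 2 (fun _ : Fin 2 => H))
    rw [anorm_pair1 hA] at this
    refine le_trans ?_ this
    have he : matOp ![![X, 0], ![0, Y]] (WithLp.toLp 2 ![0, y]) = WithLp.toLp 2 ![0, Y y] := by
      ext i; fin_cases i <;> simp [matOp_apply, Fin.sum_univ_two]
    rw [he, anorm_pair1 hA]
  exact max_le hXle hYle

lemma ABounded_matOp_diag (hA : A.IsPositive) (hX : ABounded A X) (hY : ABounded A Y) :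
    ABounded (matOp ![![A, 0], ![0, A]]) (matOp ![![X, 0], ![0, Y]]) := by
  obtain ⟨c, hc, hbc⟩ := hX
  obtain ⟨d, hd, hbd⟩ := hY
  refine ⟨max c d, lt_max_of_lt_left hc, fun v => ?_⟩
  refine le_of_sq_le_sq' (anorm_nonneg _ _)
    (mul_nonneg (le_max_of_le_left hc.le) (anorm_nonneg _ _)) ?_
  rw [mul_pow, anorm_matOp_sq hA, anorm_matOp_sq hA v, matOp_diag_apply]
  have e0 : (![X (v 0), Y (v 1)] : Fin 2 → H) 0 = X (v 0) := rfl
  have e1 : (![X (v 0), Y (v 1)] : Fin 2 → H) 1 = Y (v 1) := rfl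
  rw [e0, e1]
  have h0 : anorm A (X (v 0)) ≤ max c d * anorm A (v 0) :=
    le_trans (hbc _) (mul_le_mul_of_nonneg_right (le_max_left _ _) (anorm_nonneg _ _))
  have h1 : anorm A (Y (v 1)) ≤ max c d * anorm A (v 1) :=
    le_trans (hbd _) (mul_le_mul_of_nonneg_right (le_max_right _ _) (anorm_nonneg _ _))
  nlinarith [anorm_nonneg A (X (v 0)), anorm_nonneg A (Y (v 1)), anorm_nonneg A (v 0),
    anorm_nonneg A (v 1)]

lemma ABounded_matOp_anti (hA : A.IsPositive) (hX : ABounded A X) (hY : ABounded A Y) :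
    ABounded (matOp ![![A, 0], ![0, A]]) (matOp ![![0, X], ![Y, 0]]) := by
  obtain ⟨c, hc, hbc⟩ := hX
  obtain ⟨d, hd, hbd⟩ := hY
  refine ⟨max c d, lt_max_of_lt_left hc, fun v => ?_⟩
  refine le_of_sq_le_sq' (anorm_nonneg _ _)
    (mul_nonneg (le_max_of_le_left hc.le) (anorm_nonneg _ _)) ?_
  rw [mul_pow, anorm_matOp_sq hA, anorm_matOp_sq hA v, matOp_anti_apply]
  have e0 : (![X (v 1), Y (v 0)] : Fin 2 → H) 0 = X (v 1) := rfl
  have e1 : (![X (v 1), Y (v 0)] : Fin 2 → H) 1 = Y (v 0) := rfl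
  rw [e0, e1]
  have h0 : anorm A (X (v 1)) ≤ max c d * anorm A (v 1) :=
    le_trans (hbc _) (mul_le_mul_of_nonneg_right (le_max_left _ _) (anorm_nonneg _ _))
  have h1 : anorm A (Y (v 0)) ≤ max c d * anorm A (v 0) :=
    le_trans (hbd _) (mul_le_mul_of_nonneg_right (le_max_right _ _) (anorm_nonneg _ _))
  nlinarith [anorm_nonneg A (X (v 1)), anorm_nonneg A (Y (v 0)), anorm_nonneg A (v 0),
    anorm_nonneg A (v 1)]

lemma aSpecRad_matOp_diag (hA : A.IsPositive) (hX : ABounded A X) (hY : ABounded A Y) :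
    aSpecRad (matOp ![![A, 0], ![0, A]]) (matOp ![![X, 0], ![0, Y]]) =
      max (aSpecRad A X) (aSpecRad A Y) := by
  set 𝔸 := matOp ![![A, 0], ![0, A]] with h𝔸
  set D := matOp ![![X, 0], ![0, Y]] with hD
  have hterm : ∀ n : ℕ+, aNorm 𝔸 (D ^ (n : ℕ)) ^ ((n : ℝ))⁻¹ =
      max (aNorm A (X ^ (n : ℕ)) ^ ((n : ℝ))⁻¹) (aNorm A (Y ^ (n : ℕ)) ^ ((n : ℝ))⁻¹) := by
    intro n
    rw [hD, matOp_diag_pow, aNorm_matOp_diag hA (hX.pow _) (hY.pow _),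
      max_rpow (aNorm_nonneg A _) (aNorm_nonneg A _) (by positivity)]
  refine le_antisymm ?_ ?_
  · -- aSpecRad 𝔸 D ≤ max
    by_contra hcon
    push_neg at hcon
    have hXlt : aSpecRad A X < aSpecRad 𝔸 D := lt_of_le_of_lt (le_max_left _ _) hcon
    have hYlt : aSpecRad A Y < aSpecRad 𝔸 D := lt_of_le_of_lt (le_max_right _ _) hcon
    obtain ⟨n, hn⟩ := exists_term_lt hXlt
    obtain ⟨m, hm⟩ := exists_term_lt hYlt
    have h1 : aSpecRad 𝔸 D ≤ aNorm 𝔸 (D ^ ((n * m : ℕ+) : ℕ)) ^ ((((n * m : ℕ+) : ℕ) : ℝ))⁻¹ :=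
      aSpecRad_le 𝔸 D (n * m)
    have hnm : ((n * m : ℕ+) : ℕ) = (n : ℕ) * (m : ℕ) := by simp
    rw [hterm (n * m), hnm] at h1
    have hXle : aNorm A (X ^ ((n : ℕ) * (m : ℕ))) ^ ((((n : ℕ) * (m : ℕ) : ℕ) : ℝ))⁻¹ <
        aSpecRad 𝔸 D := lt_of_le_of_lt (term_mul_le hX n m) hn
    have hYle : aNorm A (Y ^ ((n : ℕ) * (m : ℕ))) ^ ((((n : ℕ) * (m : ℕ) : ℕ) : ℝ))⁻¹ <
        aSpecRad 𝔸 D := by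
      have h2 : aNorm A (Y ^ ((m : ℕ) * (n : ℕ))) ^ ((((m : ℕ) * (n : ℕ) : ℕ) : ℝ))⁻¹ ≤
          aNorm A (Y ^ (m : ℕ)) ^ ((m : ℝ))⁻¹ := term_mul_le hY m n
      rw [mul_comm (m : ℕ) (n : ℕ)] at h2
      exact lt_of_le_of_lt h2 hm
    exact absurd (lt_of_le_of_lt h1 (max_lt hXle hYle)) (lt_irrefl _)
  · -- max ≤ aSpecRad 𝔸 D
    refine max_le ?_ ?_
    · refine le_aSpecRad fun n => ?_
      rw [hterm n]
      exact le_trans (aSpecRad_le A X n) (le_max_left _ _)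
    · refine le_aSpecRad fun n => ?_
      rw [hterm n]
      exact le_trans (aSpecRad_le A Y n) (le_max_right _ _)

end MatOp

/-- with `𝔸 = diag(A, A)` on `H ⊕ H`,
`r_𝔸(diag(T, S)) = max{r_A(T), r_A(S)}` and `r_𝔸([[0,T],[S,0]]) = √(r_A(TS))`. -/
theorem stmt12 (A T S : H →L[ℂ] H) (hA : A.IsPositive)
    (hT : ABounded A T) (hS : ABounded A S) :
    aSpecRad (matOp ![![A, 0], ![0, A]]) (matOp ![![T, 0], ![0, S]]) =
        max (aSpecRad A T) (aSpecRad A S) ∧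
      aSpecRad (matOp ![![A, 0], ![0, A]]) (matOp ![![0, T], ![S, 0]]) =
        Real.sqrt (aSpecRad A (T * S)) := by
  constructor
  · exact aSpecRad_matOp_diag hA hT hS
  · set 𝔸 := matOp ![![A, 0], ![0, A]] with h𝔸
    set C := matOp ![![0, T], ![S, 0]] with hC
    have hCb : ABounded 𝔸 C := ABounded_matOp_anti hA hT hS
    have hsq : aSpecRad 𝔸 (C ^ 2) = aSpecRad 𝔸 C ^ 2 := aSpecRad_sq hCb
    have hC2 : C ^ 2 = matOp ![![T * S, 0], ![0, S * T]] := matOp_anti_sq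
    have hmax : aSpecRad 𝔸 (C ^ 2) = max (aSpecRad A (T * S)) (aSpecRad A (S * T)) := by
      rw [hC2]
      exact aSpecRad_matOp_diag hA (hT.mul hS) (hS.mul hT)
    have hcomm : aSpecRad A (T * S) = aSpecRad A (S * T) := aSpecRad_mul_comm hT hS
    have hfinal : aSpecRad 𝔸 C ^ 2 = aSpecRad A (T * S) := by
      rw [← hsq, hmax, ← hcomm, max_self]
    rw [← hfinal, Real.sqrt_sq (aSpecRad_nonneg 𝔸 C)]
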